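/- Let f : ℝ → H' be a continuous compactly supported function with values in a Hilbert space H', and let G f(t) = ∫_{-∞}^t f(s) ds. For any α > 1/2 and δ > 0 there is C_α > 0 with sup_{t ∈ ℝ} ‖G f(t)‖ ≤ (C_α/δ^{1/2}) · ( ∫_ℝ (1+4π²δ²s²)^α ‖f(s)‖² ds )^{1/2}; moreover every bounded continuous u : ℝ → H' defines a continuous linear functional on the weighted space, namely |∫_ℝ ⟨u(s), v(s)⟩ ds| ≤ (C_α/δ^{1/2}) ‖u‖_∞ ( ∫_ℝ (1+4π²δ²s²)^α ‖v(s)‖² ds )^{1/2}. -/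

import Mathlib

open MeasureTheory Real

-- Cauchy–Schwarz for integrals, sqrt form
lemma cs_sqrt {φ ψ : ℝ → ℝ} (hφm : AEStronglyMeasurable φ volume)
    (hψm : AEStronglyMeasurable ψ volume) (hφ0 : ∀ s, 0 ≤ φ s) (hψ0 : ∀ s, 0 ≤ ψ s)
    (hφ2 : Integrable (fun s => φ s ^ 2)) (hψ2 : Integrable (fun s => ψ s ^ 2)) :
    ∫ s, φ s * ψ s ≤ Real.sqrt (∫ s, φ s ^ 2) * Real.sqrt (∫ s, ψ s ^ 2) := by
  have hpq : (2 : ℝ).HolderConjugate 2 := Real.HolderConjugate.two_two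
  have h2 : (ENNReal.ofReal 2) = (2 : ENNReal) := by norm_num
  have hφL : MemLp φ (ENNReal.ofReal 2) volume := by
    rw [h2]; exact (memLp_two_iff_integrable_sq hφm).2 hφ2
  have hψL : MemLp ψ (ENNReal.ofReal 2) volume := by
    rw [h2]; exact (memLp_two_iff_integrable_sq hψm).2 hψ2
  have := integral_mul_le_Lp_mul_Lq_of_nonneg hpq (Filter.Eventually.of_forall hφ0)
    (Filter.Eventually.of_forall hψ0) hφL hψL
  have e1 : ∀ (f : ℝ → ℝ), (∫ s, f s ^ (2:ℝ)) = ∫ s, f s ^ 2 := by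
    intro f; congr 1; ext s; rw [show (2:ℝ) = ((2:ℕ):ℝ) by norm_num, Real.rpow_natCast]
  rw [e1, e1] at this
  calc ∫ s, φ s * ψ s ≤ (∫ s, φ s ^ 2) ^ (1/(2:ℝ)) * (∫ s, ψ s ^ 2) ^ (1/(2:ℝ)) := this
    _ = _ := by rw [← Real.sqrt_eq_rpow, ← Real.sqrt_eq_rpow]

lemma cs_int {φ ψ : ℝ → ℝ} (hφm : AEStronglyMeasurable φ volume)
    (hψm : AEStronglyMeasurable ψ volume) (hφ0 : ∀ s, 0 ≤ φ s) (hψ0 : ∀ s, 0 ≤ ψ s)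
    (hφ2 : Integrable (fun s => φ s ^ 2)) (hψ2 : Integrable (fun s => ψ s ^ 2)) :
    Integrable (fun s => φ s * ψ s) := by
  refine Integrable.mono' (hφ2.add hψ2) (hφm.mul hψm)
    (Filter.Eventually.of_forall fun s => ?_)
  simp only [Pi.add_apply]
  rw [Real.norm_eq_abs, abs_of_nonneg (mul_nonneg (hφ0 s) (hψ0 s))]
  nlinarith [sq_nonneg (φ s - ψ s), mul_nonneg (hφ0 s) (hψ0 s)]

theorem stmt11 (H' : Type) [NormedAddCommGroup H'] [InnerProductSpace ℝ H']
    [CompleteSpace H'] :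
    ∀ α : ℝ, 1 / 2 < α → ∃ C : ℝ, 0 < C ∧
      ∀ δ : ℝ, 0 < δ →
        (∀ f : ℝ → H', Continuous f → HasCompactSupport f → ∀ t : ℝ,
          ‖∫ s in Set.Iic t, f s‖ ≤ (C / Real.sqrt δ) *
            Real.sqrt (∫ s : ℝ, (1 + 4 * π ^ 2 * δ ^ 2 * s ^ 2) ^ α * ‖f s‖ ^ 2)) ∧
        (∀ (u v : ℝ → H') (Mu : ℝ), Continuous u → (∀ s : ℝ, ‖u s‖ ≤ Mu) →
          AEStronglyMeasurable v volume →
          Integrable (fun s : ℝ => (1 + 4 * π ^ 2 * δ ^ 2 * s ^ 2) ^ α * ‖v s‖ ^ 2) →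
          |∫ s : ℝ, (inner ℝ (u s) (v s) : ℝ)| ≤ (C / Real.sqrt δ) * Mu *
            Real.sqrt (∫ s : ℝ, (1 + 4 * π ^ 2 * δ ^ 2 * s ^ 2) ^ α * ‖v s‖ ^ 2)) := by
  intro α hα
  -- the model integral
  set g : ℝ → ℝ := fun x => (1 + x ^ 2) ^ (-α) with hg_def
  have hg_int : Integrable g := by
    have h := integrable_rpow_neg_one_add_norm_sq (E := ℝ) (μ := volume) (r := 2 * α)
      (by simp [Module.finrank_self]; linarith)
    refine h.congr (Filter.Eventually.of_forall fun x => ?_)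
    simp only [Real.norm_eq_abs, sq_abs, hg_def]
    norm_num [neg_div]
  have hg_pos : ∀ x, 0 < g x := fun x => Real.rpow_pos_of_pos (by positivity) _
  set Iα : ℝ := ∫ x, g x with hIα_def
  have hIα_pos : 0 < Iα := by
    rw [hIα_def]
    rw [integral_pos_iff_support_of_nonneg (fun x => (hg_pos x).le) hg_int]
    have : Function.support g = Set.univ := by
      ext x; simp [Function.mem_support, (hg_pos x).ne']
    rw [this]
    simp
  refine ⟨Real.sqrt (Iα / (2 * π)), Real.sqrt_pos.2 (by positivity), ?_⟩
  set C : ℝ := Real.sqrt (Iα / (2 * π)) with hC_def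
  have hC_pos : 0 < C := Real.sqrt_pos.2 (by positivity)
  have hC_sq : C ^ 2 = Iα / (2 * π) := Real.sq_sqrt (by positivity)
  intro δ hδ
  set w : ℝ → ℝ := fun s => 1 + 4 * π ^ 2 * δ ^ 2 * s ^ 2 with hw_def
  have hw_pos : ∀ s, 0 < w s := fun s => by rw [hw_def]; positivity
  have hw_eq : ∀ s, w s = 1 + (2 * π * δ * s) ^ 2 := fun s => by rw [hw_def]; ring
  have h2πδ : (0:ℝ) < 2 * π * δ := by positivity
  -- the weight integral
  have hwint : Integrable (fun s => w s ^ (-α)) := by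
    have := hg_int.comp_mul_left' (R := 2 * π * δ) h2πδ.ne'
    refine this.congr (Filter.Eventually.of_forall fun s => ?_)
    rw [hg_def]; simp only []
    rw [hw_eq s]
  have hwval : (∫ s, w s ^ (-α)) = C ^ 2 / δ := by
    have e : (fun s => w s ^ (-α)) = fun s => g (2 * π * δ * s) := by
      ext s; rw [hg_def]; simp only []; rw [hw_eq s]
    rw [e, MeasureTheory.Measure.integral_comp_mul_left g (2 * π * δ), smul_eq_mul,
      abs_of_pos (by positivity : (0:ℝ) < (2 * π * δ)⁻¹), ← hIα_def, hC_sq]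
    field_simp
  -- continuity of weight powers
  have hw_cont : ∀ r : ℝ, Continuous (fun s => w s ^ r) := by
    intro r
    apply Continuous.rpow_const (by rw [hw_def]; continuity)
    exact fun s => Or.inl (hw_pos s).ne'
  -- the key estimate
  have key : ∀ F : ℝ → H', AEStronglyMeasurable F volume →
      Integrable (fun s => w s ^ α * ‖F s‖ ^ 2) →
      Integrable (fun s => ‖F s‖) ∧
      (∫ s, ‖F s‖) ≤ (C / Real.sqrt δ) * Real.sqrt (∫ s, w s ^ α * ‖F s‖ ^ 2) := by
    intro F hFm hFint
    set φ : ℝ → ℝ := fun s => w s ^ (-(α/2)) with hφ_def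
    set ψ : ℝ → ℝ := fun s => w s ^ (α/2) * ‖F s‖ with hψ_def
    have hφm : AEStronglyMeasurable φ volume := (hw_cont _).aestronglyMeasurable
    have hψm : AEStronglyMeasurable ψ volume :=
      ((hw_cont _).aestronglyMeasurable).mul hFm.norm
    have hφ0 : ∀ s, 0 ≤ φ s := fun s => Real.rpow_nonneg (hw_pos s).le _
    have hψ0 : ∀ s, 0 ≤ ψ s := fun s => mul_nonneg (Real.rpow_nonneg (hw_pos s).le _) (norm_nonneg _)
    have hφsq : ∀ s, φ s ^ 2 = w s ^ (-α) := by
      intro s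
      rw [hφ_def]; simp only []
      rw [← Real.rpow_natCast (w s ^ (-(α/2))) 2, ← Real.rpow_mul (hw_pos s).le]
      norm_num
    have hψsq : ∀ s, ψ s ^ 2 = w s ^ α * ‖F s‖ ^ 2 := by
      intro s
      rw [hψ_def]; simp only []
      rw [mul_pow, ← Real.rpow_natCast (w s ^ (α/2)) 2, ← Real.rpow_mul (hw_pos s).le]
      norm_num
    have hφ2 : Integrable (fun s => φ s ^ 2) := by
      refine hwint.congr (Filter.Eventually.of_forall fun s => (hφsq s).symm)
    have hψ2 : Integrable (fun s => ψ s ^ 2) := by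
      refine hFint.congr (Filter.Eventually.of_forall fun s => (hψsq s).symm)
    have hmul_eq : ∀ s, φ s * ψ s = ‖F s‖ := by
      intro s
      rw [hφ_def, hψ_def]; simp only []
      rw [← mul_assoc, ← Real.rpow_add (hw_pos s)]
      norm_num
    constructor
    · exact (cs_int hφm hψm hφ0 hψ0 hφ2 hψ2).congr
        (Filter.Eventually.of_forall hmul_eq)
    · have h1 : (∫ s, ‖F s‖) = ∫ s, φ s * ψ s :=
        integral_congr_ae (Filter.Eventually.of_forall fun s => (hmul_eq s).symm)
      have h2 := cs_sqrt hφm hψm hφ0 hψ0 hφ2 hψ2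
      have h3 : (∫ s, φ s ^ 2) = C ^ 2 / δ := by
        rw [← hwval]; exact integral_congr_ae (Filter.Eventually.of_forall fun s => hφsq s)
      have h4 : (∫ s, ψ s ^ 2) = ∫ s, w s ^ α * ‖F s‖ ^ 2 :=
        integral_congr_ae (Filter.Eventually.of_forall fun s => hψsq s)
      have h5 : Real.sqrt (C ^ 2 / δ) = C / Real.sqrt δ := by
        rw [Real.sqrt_div (sq_nonneg C), Real.sqrt_sq hC_pos.le]
      calc (∫ s, ‖F s‖) = ∫ s, φ s * ψ s := h1
        _ ≤ Real.sqrt (∫ s, φ s ^ 2) * Real.sqrt (∫ s, ψ s ^ 2) := h2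
        _ = Real.sqrt (C ^ 2 / δ) * Real.sqrt (∫ s, w s ^ α * ‖F s‖ ^ 2) := by
            rw [h3, h4]
        _ = _ := by rw [h5]
  constructor
  · -- part (a)
    intro f hf hfc t
    have hfi : Integrable f := hf.integrable_of_hasCompactSupport hfc
    have hcs : HasCompactSupport (fun s => w s ^ α * ‖f s‖ ^ 2) := by
      have h1 : HasCompactSupport (fun s => ‖f s‖ ^ 2) :=
        hfc.comp_left (g := fun x : H' => ‖x‖ ^ 2) (by simp)
      exact h1.mul_left
    have hint : Integrable (fun s => w s ^ α * ‖f s‖ ^ 2) :=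
      ((hw_cont α).mul ((hf.norm).pow 2)).integrable_of_hasCompactSupport hcs
    obtain ⟨hn1, hn2⟩ := key f hf.aestronglyMeasurable hint
    calc ‖∫ s in Set.Iic t, f s‖ ≤ ∫ s in Set.Iic t, ‖f s‖ :=
          norm_integral_le_integral_norm f
      _ ≤ ∫ s, ‖f s‖ :=
          setIntegral_le_integral hn1 (Filter.Eventually.of_forall fun s => norm_nonneg _)
      _ ≤ _ := hn2
  · -- part (b)
    intro u v Mu hu hMu hvm hvint
    obtain ⟨hn1, hn2⟩ := key v hvm hvint
    have hMu0 : 0 ≤ Mu := le_trans (norm_nonneg (u 0)) (hMu 0)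
    have hinner_m : AEStronglyMeasurable (fun s => (inner ℝ (u s) (v s) : ℝ)) volume :=
      hu.aestronglyMeasurable.inner hvm
    have hbound : ∀ s, |(inner ℝ (u s) (v s) : ℝ)| ≤ Mu * ‖v s‖ := by
      intro s
      calc |(inner ℝ (u s) (v s) : ℝ)| ≤ ‖u s‖ * ‖v s‖ := abs_real_inner_le_norm _ _
        _ ≤ Mu * ‖v s‖ := mul_le_mul_of_nonneg_right (hMu s) (norm_nonneg _)
    have hinner_int : Integrable (fun s => (inner ℝ (u s) (v s) : ℝ)) := by
      refine Integrable.mono' (hn1.const_mul Mu) hinner_m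
        (Filter.Eventually.of_forall fun s => ?_)
      rw [Real.norm_eq_abs]; exact hbound s
    calc |∫ s, (inner ℝ (u s) (v s) : ℝ)| ≤ ∫ s, |(inner ℝ (u s) (v s) : ℝ)| := by
          simpa [Real.norm_eq_abs] using
            norm_integral_le_integral_norm (fun s => (inner ℝ (u s) (v s) : ℝ))
      _ ≤ ∫ s, Mu * ‖v s‖ := integral_mono hinner_int.abs (hn1.const_mul Mu)
          (fun s => hbound s)
      _ = Mu * ∫ s, ‖v s‖ := integral_const_mul Mu _
      _ ≤ Mu * ((C / Real.sqrt δ) * Real.sqrt (∫ s, w s ^ α * ‖v s‖ ^ 2)) :=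
          mul_le_mul_of_nonneg_left hn2 hMu0
      _ = _ := by ring
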